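/- Let w be the minimal length coset representative of the affine Weyl group of type C_n modulo the finite Weyl group whose associated coroot lattice point is ⌈k/(2n)⌉ε_ℓ, where k = 2n(⌈k/(2n)⌉−1)+ℓ with 1 ≤ ℓ ≤ 2n (interpreting the coroot point appropriately when ℓ > n). Then the length of w equals k; equivalently, exactly k hyperplanes of the affine arrangement separate the fundamental alcove from the alcove of w. -/

import Mathlib

/-! The affine hyperplane arrangement of type `Cₙ` in `ℝⁿ = Fin n → ℝ`. -/

noncomputable def dotp (n : ℕ) (x y : Fin n → ℝ) : ℝ := ∑ i, x i * y i

def stdBasis (n : ℕ) (i : Fin n) : Fin n → ℝ := fun j => if j = i then 1 else 0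

/-- The positive roots of type `Cₙ`: `2εᵢ` and `εᵢ ± εⱼ` for `i < j`. -/
def PosRoot (n : ℕ) : Set (Fin n → ℝ) :=
  {α | (∃ i, α = (2 : ℝ) • stdBasis n i) ∨
       (∃ i j : Fin n, i < j ∧ (α = stdBasis n i + stdBasis n j ∨ α = stdBasis n i - stdBasis n j))}

/-- The complement of the affine arrangement `{x : (x, α) = m}`, `α` a positive root, `m ∈ ℤ`. -/
def ArrComp (n : ℕ) : Set (Fin n → ℝ) :=
  {x | ∀ α ∈ PosRoot n, ∀ m : ℤ, dotp n x α ≠ (m : ℝ)}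

/-- An alcove is a connected component of the complement of the arrangement. -/
def IsAlcove (n : ℕ) (A : Set (Fin n → ℝ)) : Prop :=
  ∃ x ∈ ArrComp n, A = connectedComponentIn (ArrComp n) x

/-- The translate by `p` of the fundamental region (the closed cube of side 1 around `p`). -/
def cube (n : ℕ) (p : Fin n → ℝ) : Set (Fin n → ℝ) := {x | ∀ i, |x i - p i| ≤ 1/2}

/-- The fundamental alcove: `0 < (x, α) < 1` for every positive root `α`. -/
def FundAlcove (n : ℕ) : Set (Fin n → ℝ) :=
  {x | ∀ α ∈ PosRoot n, 0 < dotp n x α ∧ dotp n x α < 1}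

/-- The hyperplane `{x : (x, α) = m}` separates `A` and `B`. -/
def Separates (n : ℕ) (α : Fin n → ℝ) (m : ℤ) (A B : Set (Fin n → ℝ)) : Prop :=
  ((∀ x ∈ A, dotp n x α < (m : ℝ)) ∧ (∀ x ∈ B, (m : ℝ) < dotp n x α)) ∨
  ((∀ x ∈ B, dotp n x α < (m : ℝ)) ∧ (∀ x ∈ A, (m : ℝ) < dotp n x α))

/-- The number of arrangement hyperplanes separating `A` from `B`. -/
noncomputable def sepCount (n : ℕ) (A B : Set (Fin n → ℝ)) : ℕ :=
  Nat.card {q : (Fin n → ℝ) × ℤ | q.1 ∈ PosRoot n ∧ Separates n q.1 q.2 A B}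

def rget (n : ℕ) (x : Fin n → ℝ) (i : ℕ) : ℝ := if h : i < n then x ⟨i, h⟩ else 0

/-- Orthogonal projection onto the hyperplane `{v : v (ℓ-1) = c}` (1-indexed coordinate `ℓ`). -/
def piMap (n : ℕ) (ℓ : ℕ) (c : ℝ) (x : Fin n → ℝ) : Fin n → ℝ :=
  fun j => if j.val = ℓ - 1 then c else x j

/-- Identification of the hyperplane with `ℝⁿ⁻¹` via the basis `{εⱼ : j ≠ ℓ}`:
delete the (1-indexed) `ℓ`-th coordinate. -/
def delCoordR (n : ℕ) (ℓ : ℕ) (x : Fin n → ℝ) : Fin (n-1) → ℝ :=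
  fun t => rget n x (if t.val < ℓ - 1 then t.val else t.val + 1)

/-- Points of the open chain region `1/2 > x₀ > x₁ > ⋯ > x_{n-1} > 0`. -/
def ChainSet (n : ℕ) : Set (Fin n → ℝ) :=
  {x | rget n x 0 < 1/2 ∧ (∀ i j : Fin n, i < j → x j < x i) ∧ 0 < rget n x (n-1)}

section Aux
variable {n : ℕ}

lemma dotp_std (x : Fin n → ℝ) (i : Fin n) : dotp n x (stdBasis n i) = x i := by
  simp [dotp, stdBasis, mul_ite, mul_one, mul_zero]

lemma dotp_smul2 (x : Fin n → ℝ) (i : Fin n) : dotp n x ((2:ℝ) • stdBasis n i) = 2 * x i := by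
  simp [dotp, stdBasis, mul_ite, mul_one, mul_zero, mul_comm]

lemma dotp_addb (x : Fin n → ℝ) (i j : Fin n) :
    dotp n x (stdBasis n i + stdBasis n j) = x i + x j := by
  simp [dotp, mul_add, Finset.sum_add_distrib, ← dotp_std x i, ← dotp_std x j]

lemma dotp_subb (x : Fin n → ℝ) (i j : Fin n) :
    dotp n x (stdBasis n i - stdBasis n j) = x i - x j := by
  simp [dotp, mul_sub, Finset.sum_sub_distrib, ← dotp_std x i, ← dotp_std x j]

end Aux

section Aux2
variable {n : ℕ}

lemma dotp_cont (α : Fin n → ℝ) : Continuous fun x : Fin n → ℝ => dotp n x α :=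
  continuous_finset_sum _ fun i _ => (continuous_apply i).mul continuous_const

lemma comp_mono_lt (y : Fin n → ℝ) {α : Fin n → ℝ} (hα : α ∈ PosRoot n)
    (m : ℤ) {u v : Fin n → ℝ}
    (hu : u ∈ connectedComponentIn (ArrComp n) y)
    (hv : v ∈ connectedComponentIn (ArrComp n) y) :
    dotp n u α < m → dotp n v α < m := by
  intro h
  by_contra h'
  push_neg at h'
  have hvne : dotp n v α ≠ (m:ℝ) := (connectedComponentIn_subset _ _ hv) α hα m
  have hpc : IsPreconnected ((fun x => dotp n x α) '' connectedComponentIn (ArrComp n) y) :=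
    (isPreconnected_connectedComponentIn).image _ (dotp_cont α).continuousOn
  have hm : (m:ℝ) ∈ (fun x => dotp n x α) '' connectedComponentIn (ArrComp n) y :=
    hpc.ordConnected.out (Set.mem_image_of_mem _ hu) (Set.mem_image_of_mem _ hv)
      ⟨le_of_lt h, h'⟩
  obtain ⟨z, hz, hfz⟩ := hm
  exact (connectedComponentIn_subset _ _ hz) α hα m hfz

/-- the candidate separating set determined by a point `y`. -/
def Tset (n : ℕ) (y : Fin n → ℝ) : Set ((Fin n → ℝ) × ℤ) :=
  {q | q.1 ∈ PosRoot n ∧ ((1 ≤ q.2 ∧ (q.2:ℝ) < dotp n y q.1) ∨ (dotp n y q.1 < q.2 ∧ q.2 ≤ 0))}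

lemma S_sub_T {B : Set (Fin n → ℝ)} {z y : Fin n → ℝ} (hz : z ∈ FundAlcove n) (hy : y ∈ B) :
    {q : (Fin n → ℝ) × ℤ | q.1 ∈ PosRoot n ∧ Separates n q.1 q.2 (FundAlcove n) B}
      ⊆ Tset n y := by
  rintro ⟨α, m⟩ ⟨hα, hsep | hsep⟩
  · refine ⟨hα, Or.inl ⟨?_, hsep.2 y hy⟩⟩
    have h0 : (0:ℝ) < dotp n z α := (hz α hα).1
    have h1 : dotp n z α < m := hsep.1 z hz
    have : (0:ℝ) < (m:ℝ) := lt_trans h0 h1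
    exact_mod_cast Int.cast_pos.mp this
  · refine ⟨hα, Or.inr ⟨hsep.1 y hy, ?_⟩⟩
    have h1 : (m:ℝ) < dotp n z α := hsep.2 z hz
    have : (m:ℝ) < 1 := lt_trans h1 (hz α hα).2
    have : m < 1 := by exact_mod_cast this
    omega

noncomputable def PRfin (n : ℕ) : Finset (Fin n → ℝ) :=
  (Finset.univ.image fun i : Fin n => (2:ℝ) • stdBasis n i)
  ∪ ((Finset.univ.filter fun p : Fin n × Fin n => p.1 < p.2).image
      fun p => stdBasis n p.1 + stdBasis n p.2)
  ∪ ((Finset.univ.filter fun p : Fin n × Fin n => p.1 < p.2).image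
      fun p => stdBasis n p.1 - stdBasis n p.2)

lemma PRfin_coe : (PRfin n : Set (Fin n → ℝ)) = PosRoot n := by
  ext α
  simp only [PRfin, Finset.coe_union, Set.mem_union, Finset.coe_image, Set.mem_image,
    Finset.mem_coe, Finset.mem_image, Finset.mem_filter, Finset.mem_univ, true_and,
    PosRoot, Set.mem_setOf_eq]
  constructor
  · rintro ((⟨i, rfl⟩ | ⟨⟨i, j⟩, hij, rfl⟩) | ⟨⟨i, j⟩, hij, rfl⟩)
    · exact Or.inl ⟨i, rfl⟩
    · exact Or.inr ⟨i, j, hij, Or.inl rfl⟩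
    · exact Or.inr ⟨i, j, hij, Or.inr rfl⟩
  · rintro (⟨i, rfl⟩ | ⟨i, j, hij, (rfl | rfl)⟩)
    · exact Or.inl (Or.inl ⟨i, rfl⟩)
    · exact Or.inl (Or.inr ⟨(i, j), hij, rfl⟩)
    · exact Or.inr ⟨(i, j), hij, rfl⟩

noncomputable def mset (d : ℝ) : Finset ℤ := Finset.Icc 1 ⌊d⌋ ∪ Finset.Icc (⌊d⌋ + 1) 0

lemma mem_mset {d : ℝ} (hd : ∀ m : ℤ, d ≠ m) (m : ℤ) :
    m ∈ mset d ↔ ((1 ≤ m ∧ (m:ℝ) < d) ∨ (d < m ∧ m ≤ 0)) := by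
  have h1 : (m:ℝ) < d ↔ m ≤ ⌊d⌋ := by
    constructor
    · intro h; exact Int.le_floor.mpr h.le
    · intro h; exact lt_of_le_of_ne (Int.le_floor.mp h) (fun he => hd m he.symm)
  have h2 : d < (m:ℝ) ↔ ⌊d⌋ + 1 ≤ m := by
    constructor
    · intro h
      have := Int.floor_lt.mpr h
      omega
    · intro h; exact Int.floor_lt.mp (by omega)
  rw [mset, Finset.mem_union, Finset.mem_Icc, Finset.mem_Icc, h1, h2]

lemma mset_card (d : ℝ) : (mset d).card = (⌊d⌋).natAbs := by
  have hdisj : Disjoint (Finset.Icc 1 ⌊d⌋) (Finset.Icc (⌊d⌋ + 1) 0) := by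
    rw [Finset.disjoint_left]
    intro m h1 h2
    simp only [Finset.mem_Icc] at h1 h2
    omega
  rw [mset, Finset.card_union_of_disjoint hdisj, Int.card_Icc, Int.card_Icc]
  omega

noncomputable def Tfin (n : ℕ) (y : Fin n → ℝ) : Finset ((Fin n → ℝ) × ℤ) :=
  (PRfin n).biUnion fun α => (mset (dotp n y α)).image fun m => (α, m)

lemma Tset_eq (y : Fin n → ℝ) (hy : y ∈ ArrComp n) : Tset n y = (Tfin n y : Set _) := by
  ext ⟨α, m⟩
  simp only [Tset, Set.mem_setOf_eq, Tfin, Finset.coe_biUnion, Set.mem_iUnion,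
    Finset.mem_coe, Finset.mem_image, Finset.mem_biUnion]
  constructor
  · rintro ⟨hα, hm⟩
    refine ⟨α, by rw [← PRfin_coe] at hα; exact_mod_cast hα, m, ?_, rfl⟩
    exact (mem_mset (hy α hα) m).mpr hm
  · rintro ⟨β, hβ, m', hm', he⟩
    rw [Prod.mk.injEq] at he
    obtain ⟨rfl, rfl⟩ := he
    have hα : β ∈ PosRoot n := by rw [← PRfin_coe]; exact_mod_cast hβ
    exact ⟨hα, (mem_mset (hy β hα) m').mp hm'⟩

lemma Tfin_card (y : Fin n → ℝ) :
    (Tfin n y).card = ∑ α ∈ PRfin n, (⌊dotp n y α⌋).natAbs := by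
  rw [Tfin, Finset.card_biUnion]
  · refine Finset.sum_congr rfl fun α _ => ?_
    rw [Finset.card_image_of_injective _ (fun a b h => (Prod.mk.injEq _ _ _ _).mp h |>.2),
      mset_card]
  · intro a _ b _ hab
    simp only [Finset.disjoint_left, Finset.mem_image]
    rintro ⟨α, m⟩ ⟨m1, _, h1⟩ ⟨m2, _, h2⟩
    rw [Prod.mk.injEq] at h1 h2
    exact hab (h1.1.trans h2.1.symm)

end Aux2

section Aux3
variable {n : ℕ}

lemma inj_two {a b : Fin n} (h : (2:ℝ) • stdBasis n a = (2:ℝ) • stdBasis n b) : a = b := by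
  have := congrFun h a
  simp only [Pi.smul_apply, stdBasis, smul_eq_mul] at this
  split_ifs at this with h1 <;> simp_all

lemma indic_add {a1 a2 b1 b2 : Fin n} (hab : a1 < a2) (hcd : b1 < b2)
    (h : stdBasis n a1 + stdBasis n a2 = stdBasis n b1 + stdBasis n b2) :
    a1 = b1 ∧ a2 = b2 := by
  have key : ∀ t : Fin n, ((if t = a1 then (1:ℝ) else 0) + (if t = a2 then 1 else 0))
      = ((if t = b1 then (1:ℝ) else 0) + (if t = b2 then 1 else 0)) := by
    intro t; exact congrFun h t
  have e1 : a1 = b1 ∨ a1 = b2 := by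
    have := key a1
    have hne : a1 ≠ a2 := ne_of_lt hab
    split_ifs at this <;> simp_all
  have e2 : a2 = b1 ∨ a2 = b2 := by
    have := key a2
    have hne : a2 ≠ a1 := (ne_of_lt hab).symm
    split_ifs at this <;> simp_all
  have h1 : a1.val < a2.val := hab
  have h2 : b1.val < b2.val := hcd
  have e1' : a1.val = b1.val ∨ a1.val = b2.val := by
    rcases e1 with h | h
    · exact Or.inl (by rw [h])
    · exact Or.inr (by rw [h])
  have e2' : a2.val = b1.val ∨ a2.val = b2.val := by
    rcases e2 with h | h
    · exact Or.inl (by rw [h])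
    · exact Or.inr (by rw [h])
  constructor <;> apply Fin.ext <;> omega

lemma indic_sub {a1 a2 b1 b2 : Fin n} (hab : a1 < a2) (hcd : b1 < b2)
    (h : stdBasis n a1 - stdBasis n a2 = stdBasis n b1 - stdBasis n b2) :
    a1 = b1 ∧ a2 = b2 := by
  have key : ∀ t : Fin n, ((if t = a1 then (1:ℝ) else 0) - (if t = a2 then 1 else 0))
      = ((if t = b1 then (1:ℝ) else 0) - (if t = b2 then 1 else 0)) := by
    intro t; exact congrFun h t
  have e1 : b1 = a1 := by
    have := key b1
    have hne : b1 ≠ b2 := ne_of_lt hcd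
    split_ifs at this <;> first | assumption | exact absurd rfl (by assumption) | norm_num at this | simp_all
  subst e1
  have e2 : a2 = b2 := by
    have := key a2
    have hne : a2 ≠ b1 := (ne_of_lt hab).symm
    split_ifs at this <;> first | assumption | exact absurd rfl (by assumption) | norm_num at this | simp_all
  exact ⟨rfl, e2⟩

lemma two_ne_add {i a b : Fin n} (hab : a < b) :
    (2:ℝ) • stdBasis n i ≠ stdBasis n a + stdBasis n b := by
  intro h
  have := congrFun h a
  have hne : a ≠ b := ne_of_lt hab
  simp only [Pi.smul_apply, Pi.add_apply, stdBasis, smul_eq_mul] at this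
  split_ifs at this <;> first | assumption | exact absurd rfl (by assumption) | norm_num at this | simp_all

lemma two_ne_sub {i a b : Fin n} (hab : a < b) :
    (2:ℝ) • stdBasis n i ≠ stdBasis n a - stdBasis n b := by
  intro h
  have := congrFun h b
  have hne : b ≠ a := (ne_of_lt hab).symm
  simp only [Pi.smul_apply, Pi.sub_apply, stdBasis, smul_eq_mul] at this
  split_ifs at this <;> first | assumption | exact absurd rfl (by assumption) | norm_num at this | simp_all

lemma add_ne_sub {a b u v : Fin n} (hab : a < b) (huv : u < v) :
    stdBasis n a + stdBasis n b ≠ stdBasis n u - stdBasis n v := by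
  intro h
  have := congrFun h v
  have hne : v ≠ u := (ne_of_lt huv).symm
  simp only [Pi.add_apply, Pi.sub_apply, stdBasis] at this
  split_ifs at this <;> first | assumption | exact absurd rfl (by assumption) | norm_num at this | simp_all

end Aux3

section Aux4
variable {n : ℕ}

def pairsF (n : ℕ) : Finset (Fin n × Fin n) :=
  Finset.univ.filter fun q : Fin n × Fin n => q.1 < q.2

lemma sum_PRfin (f : (Fin n → ℝ) → ℕ) :
    ∑ α ∈ PRfin n, f α =
      (∑ i, f ((2:ℝ) • stdBasis n i)) +
      ∑ q ∈ pairsF n, (f (stdBasis n q.1 + stdBasis n q.2) + f (stdBasis n q.1 - stdBasis n q.2)) := by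
  classical
  have hd1 : Disjoint ((Finset.univ.image fun i : Fin n => (2:ℝ) • stdBasis n i))
      ((pairsF n).image fun q => stdBasis n q.1 + stdBasis n q.2) := by
    rw [Finset.disjoint_left]
    rintro α hα hβ
    simp only [Finset.mem_image, Finset.mem_univ, true_and, pairsF, Finset.mem_filter] at hα hβ
    obtain ⟨i, rfl⟩ := hα
    obtain ⟨⟨a, b⟩, hab, he⟩ := hβ
    exact two_ne_add hab he.symm
  have hd2 : Disjoint ((Finset.univ.image fun i : Fin n => (2:ℝ) • stdBasis n i)
        ∪ (pairsF n).image fun q => stdBasis n q.1 + stdBasis n q.2)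
      ((pairsF n).image fun q => stdBasis n q.1 - stdBasis n q.2) := by
    rw [Finset.disjoint_left]
    rintro α hα hβ
    simp only [Finset.mem_union, Finset.mem_image, Finset.mem_univ, true_and, pairsF,
      Finset.mem_filter] at hα hβ
    obtain ⟨⟨u, v⟩, huv, he⟩ := hβ
    rcases hα with ⟨i, rfl⟩ | ⟨⟨a, b⟩, hab, he'⟩
    · exact two_ne_sub huv he.symm
    · rw [← he'] at he
      exact add_ne_sub hab huv he.symm
  have hPR : PRfin n = ((Finset.univ.image fun i : Fin n => (2:ℝ) • stdBasis n i)
        ∪ (pairsF n).image fun q => stdBasis n q.1 + stdBasis n q.2)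
        ∪ (pairsF n).image fun q => stdBasis n q.1 - stdBasis n q.2 := rfl
  rw [hPR, Finset.sum_union hd2, Finset.sum_union hd1, Finset.sum_image, Finset.sum_image,
    Finset.sum_image, Finset.sum_add_distrib]
  · ring
  · rintro ⟨a, b⟩ ha ⟨u, v⟩ hu he
    simp only [pairsF, Finset.mem_coe, Finset.mem_filter] at ha hu
    obtain ⟨h1, h2⟩ := indic_sub ha.2 hu.2 he
    exact Prod.ext h1 h2
  · rintro ⟨a, b⟩ ha ⟨u, v⟩ hu he
    simp only [pairsF, Finset.mem_coe, Finset.mem_filter] at ha hu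
    obtain ⟨h1, h2⟩ := indic_add ha.2 hu.2 he
    exact Prod.ext h1 h2
  · intro a _ b _ h
    exact inj_two h

end Aux4

section Aux5
variable {n : ℕ}

lemma Tset_finite (y : Fin n → ℝ) (hy : y ∈ ArrComp n) : (Tset n y).Finite := by
  rw [Tset_eq y hy]; exact (Tfin n y).finite_toSet

lemma fund_mem (hn : 1 ≤ n) :
    (fun i : Fin n => ((n : ℝ) - (i:ℕ))/(2*n+1)) ∈ FundAlcove n := by
  intro α hα
  have hden : (0:ℝ) < 2*n+1 := by positivity
  rcases hα with ⟨i, rfl⟩ | ⟨i, j, hij, (rfl | rfl)⟩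
  · rw [dotp_smul2]
    have hi : (i:ℕ) < n := i.isLt
    have hi' : ((i:ℕ):ℝ) < (n:ℝ) := by exact_mod_cast hi
    have hpos : (0:ℝ) < (n:ℝ) - (i:ℕ) := by linarith
    constructor
    · have := div_pos hpos hden; linarith
    · have he : 2 * (((n:ℝ) - (i:ℕ))/(2*n+1)) = (2*((n:ℝ) - (i:ℕ)))/(2*n+1) := by ring
      rw [he, div_lt_one hden]; linarith
  · rw [dotp_addb]
    have hi : ((i:ℕ):ℝ) < (n:ℝ) := by exact_mod_cast i.isLt
    have hj : ((j:ℕ):ℝ) < (n:ℝ) := by exact_mod_cast j.isLt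
    constructor
    · have : (0:ℝ) < ((n:ℝ) - i) := by linarith
      have : (0:ℝ) < ((n:ℝ) - j) := by linarith
      positivity
    · rw [← add_div, div_lt_one hden]
      have hi0 : (0:ℝ) ≤ ((i:ℕ):ℝ) := by positivity
      have hj0 : (0:ℝ) ≤ ((j:ℕ):ℝ) := by positivity
      linarith
  · rw [dotp_subb]
    have hij' : ((i:ℕ):ℝ) < ((j:ℕ):ℝ) := by exact_mod_cast hij
    have hj : ((j:ℕ):ℝ) < (n:ℝ) := by exact_mod_cast j.isLt
    have hi0 : (0:ℝ) ≤ ((i:ℕ):ℝ) := by positivity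
    rw [div_sub_div_same]
    constructor
    · apply div_pos (by linarith) hden
    · rw [div_lt_one hden]; linarith

lemma sandwich (n k : ℕ) (hn : 1 ≤ n) (p y : Fin n → ℝ) (hy : y ∈ ArrComp n)
    (hycube : connectedComponentIn (ArrComp n) y ⊆ cube n p)
    (hTcard : (Tset n y).ncard = k)
    (hTsep : ∀ q ∈ Tset n y, ∀ B : Set (Fin n → ℝ), B ⊆ cube n p → B ⊆ ArrComp n →
       Separates n q.1 q.2 (FundAlcove n) B)
    (A : Set (Fin n → ℝ)) (hA : IsAlcove n A) (hcube : A ⊆ cube n p)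
    (hdist : ∀ B, IsAlcove n B → B ⊆ cube n p →
      sepCount n (FundAlcove n) A ≤ sepCount n (FundAlcove n) B) :
    sepCount n (FundAlcove n) A = k := by
  obtain ⟨x₀, hx₀, rfl⟩ := hA
  have hz := fund_mem hn
  set z := (fun i : Fin n => ((n : ℝ) - (i:ℕ))/(2*n+1)) with hzdef
  have hAsub : connectedComponentIn (ArrComp n) x₀ ⊆ ArrComp n := connectedComponentIn_subset _ _
  have hx₀A : x₀ ∈ connectedComponentIn (ArrComp n) x₀ := mem_connectedComponentIn hx₀
  -- upper bound
  have hBalc : IsAlcove n (connectedComponentIn (ArrComp n) y) := ⟨y, hy, rfl⟩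
  have hyB : y ∈ connectedComponentIn (ArrComp n) y := mem_connectedComponentIn hy
  have hupper : sepCount n (FundAlcove n) (connectedComponentIn (ArrComp n) y) ≤ k := by
    rw [sepCount, Nat.card_coe_set_eq, ← hTcard]
    exact Set.ncard_le_ncard (S_sub_T hz hyB) (Tset_finite y hy)
  -- lower bound
  have hlower : k ≤ sepCount n (FundAlcove n) (connectedComponentIn (ArrComp n) x₀) := by
    rw [sepCount, Nat.card_coe_set_eq, ← hTcard]
    apply Set.ncard_le_ncard
    · rintro ⟨α, m⟩ hq
      exact ⟨hq.1, hTsep _ hq _ hcube hAsub⟩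
    · exact (Tset_finite x₀ hx₀).subset (S_sub_T hz hx₀A)
  exact le_antisymm ((hdist _ hBalc hycube).trans hupper) hlower

end Aux5

section Aux6
variable {n : ℕ}

noncomputable def del (n : ℕ) (i : Fin n) : ℝ := ((i:ℕ) + 5 : ℝ)⁻¹

lemma del_pos (i : Fin n) : 0 < del n i := by
  have : (0:ℝ) < (i:ℕ) + 5 := by positivity
  exact inv_pos.mpr this

lemma del_lt (i : Fin n) : del n i < 4⁻¹ := by
  have h4 : (0:ℝ) < 4 := by norm_num
  have : (4:ℝ) < (i:ℕ) + 5 := by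
    have : (0:ℝ) ≤ ((i:ℕ):ℝ) := by positivity
    linarith
  calc del n i = ((i:ℕ) + 5 : ℝ)⁻¹ := rfl
    _ < 4⁻¹ := by
        apply inv_strictAnti₀ h4 this

lemma del_anti {i j : Fin n} (h : i < j) : del n j < del n i := by
  have h1 : (0:ℝ) < (i:ℕ) + 5 := by positivity
  have h2 : ((i:ℕ):ℝ) < ((j:ℕ):ℝ) := by exact_mod_cast h
  exact inv_strictAnti₀ h1 (by linarith)

lemma ne_int_of_between {a : ℤ} {r : ℝ} (h1 : (a:ℝ) < r) (h2 : r < a+1) (m : ℤ) : r ≠ m := by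
  intro he
  rw [he] at h1 h2
  have l1 : a < m := by exact_mod_cast h1
  have l2 : (m:ℝ) < ((a+1 : ℤ):ℝ) := by push_cast; linarith
  have l3 : m < a + 1 := by exact_mod_cast l2
  omega

lemma floor_eq_of_between {a : ℤ} {r : ℝ} (h1 : (a:ℝ) < r) (h2 : r < a+1) : ⌊r⌋ = a :=
  Int.floor_eq_iff.mpr ⟨le_of_lt h1, h2⟩

noncomputable def ybuild (n : ℕ) (i₀ : Fin n) (s : ℝ) : Fin n → ℝ :=
  fun i => if i = i₀ then s else del n i

def pbuild (n : ℕ) (i₀ : Fin n) (P : ℝ) : Fin n → ℝ := fun i => if i = i₀ then P else 0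

end Aux6

section Aux7
variable {n : ℕ}

lemma Tcard_eval (i₀ : Fin n) (s : ℝ) (a1 a2 a3 : ℤ)
    (h2s1 : (a1:ℝ) < 2*s) (h2s2 : 2*s < a1+1)
    (hps : ∀ d:ℝ, 0 < d → d < 4⁻¹ → (a2:ℝ) < s+d ∧ s+d < a2+1)
    (hsm : ∀ d:ℝ, 0 < d → d < 4⁻¹ → (a3:ℝ) < s-d ∧ s-d < a3+1) :
    ∑ α ∈ PRfin n, (⌊dotp n (ybuild n i₀ s) α⌋).natAbs
      = a1.natAbs + (a2.natAbs + a3.natAbs) * (n - 1 - i₀.val)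
        + (a2.natAbs + (-a3-1).natAbs) * i₀.val := by
  classical
  set K1 := a2.natAbs + a3.natAbs with hK1
  set K2 := a2.natAbs + (-a3-1).natAbs with hK2
  set y := ybuild n i₀ s with hy
  have hyi₀ : y i₀ = s := if_pos rfl
  have hyi : ∀ i, i ≠ i₀ → y i = del n i := fun i h => if_neg h
  rw [sum_PRfin]
  have hA : ∑ i, (⌊dotp n y ((2:ℝ) • stdBasis n i)⌋).natAbs = a1.natAbs := by
    rw [Fintype.sum_eq_add_sum_compl i₀]
    have h1 : dotp n y ((2:ℝ) • stdBasis n i₀) = 2*s := by rw [dotp_smul2, hyi₀]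
    have h2 : ∀ i ∈ ({i₀}ᶜ : Finset (Fin n)), (⌊dotp n y ((2:ℝ) • stdBasis n i)⌋).natAbs = 0 := by
      intro i hi
      rw [Finset.mem_compl, Finset.mem_singleton] at hi
      rw [dotp_smul2, hyi i hi]
      have hd1 := del_pos i
      have hd2 := del_lt i
      rw [floor_eq_of_between (a := 0) (by push_cast; linarith) (by push_cast; linarith)]
      rfl
    rw [h1, floor_eq_of_between h2s1 h2s2, Finset.sum_eq_zero h2, add_zero]
  rw [hA]
  have hpair : ∀ q ∈ pairsF n,
      ((⌊dotp n y (stdBasis n q.1 + stdBasis n q.2)⌋).natAbs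
        + (⌊dotp n y (stdBasis n q.1 - stdBasis n q.2)⌋).natAbs)
      = (if q.1 = i₀ then K1 else if q.2 = i₀ then K2 else 0) := by
    rintro ⟨i, j⟩ hq
    simp only [pairsF, Finset.mem_filter, Finset.mem_univ, true_and] at hq
    rw [dotp_addb, dotp_subb]
    by_cases hi : i = i₀
    · have hj : j ≠ i₀ := by
        intro he
        have hij : i = j := hi.trans he.symm
        rw [hij] at hq
        exact lt_irrefl _ hq
      rw [hi, hyi₀, hyi j hj]
      obtain ⟨hp1, hp2⟩ := hps (del n j) (del_pos j) (del_lt j)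
      obtain ⟨hm1, hm2⟩ := hsm (del n j) (del_pos j) (del_lt j)
      rw [floor_eq_of_between hp1 hp2, floor_eq_of_between hm1 hm2, if_pos rfl]
    · by_cases hj : j = i₀
      · subst hj
        rw [hyi i hi, hyi₀]
        obtain ⟨hp1, hp2⟩ := hps (del n i) (del_pos i) (del_lt i)
        obtain ⟨hm1, hm2⟩ := hsm (del n i) (del_pos i) (del_lt i)
        have e1 : del n i + s = s + del n i := by ring
        have hq1 : ((-a3-1 : ℤ):ℝ) < del n i - s := by push_cast; push_cast at hm2; linarith
        have hq2 : del n i - s < ((-a3-1 : ℤ):ℝ) + 1 := by push_cast; push_cast at hm1; linarith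
        rw [e1, floor_eq_of_between hp1 hp2, floor_eq_of_between hq1 hq2, if_neg hi, if_pos rfl]
      · rw [hyi i hi, hyi j hj]
        have h1 := del_pos i
        have h2 := del_pos j
        have h3 := del_lt i
        have h4 := del_lt j
        have h5 := del_anti hq
        rw [floor_eq_of_between (a := 0) (by push_cast; linarith) (by push_cast; linarith),
          floor_eq_of_between (a := 0) (by push_cast; linarith) (by push_cast; linarith),
          if_neg hi, if_neg hj]
        simp
  rw [Finset.sum_congr rfl hpair, pairsF, Finset.sum_filter, ← Finset.univ_product_univ,
    Finset.sum_product]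
  have hinner : ∀ i : Fin n,
      (∑ j, if i < j then (if i = i₀ then K1 else if j = i₀ then K2 else 0) else 0)
      = (if i = i₀ then K1 * (n - 1 - i₀.val) else if i < i₀ then K2 else 0) := by
    intro i
    by_cases hi : i = i₀
    · subst hi
      have hptw : ∀ j : Fin n, (if i < j then (if i = i then K1 else if j = i then K2 else 0) else 0)
          = (if i < j then K1 else 0) := by intro j; simp
      rw [Finset.sum_congr rfl (fun j _ => hptw j), Finset.sum_ite, Finset.sum_const,
        Finset.sum_const_zero, add_zero]
      have he : (Finset.univ.filter fun j => i < j) = Finset.Ioi i := by ext j; simp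
      rw [he, Fin.card_Ioi, smul_eq_mul, mul_comm, if_pos rfl]
    · rw [if_neg hi]
      have hptw : ∀ j : Fin n, (if i < j then (if i = i₀ then K1 else if j = i₀ then K2 else 0) else 0)
          = (if j = i₀ then (if i < i₀ then K2 else 0) else 0) := by
        intro j
        by_cases hj : j = i₀
        · subst hj
          by_cases hij : i < j <;> simp [hij, hi]
        · by_cases hij : i < j <;> simp [hij, hi, hj]
      rw [Finset.sum_congr rfl (fun j _ => hptw j), Finset.sum_ite_eq' Finset.univ i₀]
      simp
  rw [Finset.sum_congr rfl (fun i _ => hinner i), Fintype.sum_eq_add_sum_compl i₀, if_pos rfl]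
  have hcompl : ∑ i ∈ ({i₀}ᶜ : Finset (Fin n)), (if i = i₀ then K1 * (n - 1 - i₀.val) else if i < i₀ then K2 else 0)
      = K2 * i₀.val := by
    have hptw : ∀ i ∈ ({i₀}ᶜ : Finset (Fin n)), (if i = i₀ then K1 * (n - 1 - i₀.val) else if i < i₀ then K2 else 0)
        = (if i < i₀ then K2 else 0) := by
      intro i hi
      rw [Finset.mem_compl, Finset.mem_singleton] at hi
      rw [if_neg hi]
    rw [Finset.sum_congr rfl hptw]
    rw [Finset.sum_subset (Finset.subset_univ _) (by
      intro x _ hx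
      rw [Finset.mem_compl, Finset.mem_singleton, not_not] at hx
      subst hx
      simp)]
    rw [Finset.sum_ite, Finset.sum_const, Finset.sum_const_zero, add_zero]
    have he : (Finset.univ.filter fun j : Fin n => j < i₀) = Finset.Iio i₀ := by ext j; simp
    rw [he, Fin.card_Iio, smul_eq_mul, mul_comm]
  rw [hcompl]
  ring

end Aux7

section Aux8
variable {n : ℕ}

lemma branch_analysis {d : ℝ} {a m : ℤ} (hd1 : (a:ℝ) < d) (hd2 : d < (a:ℝ)+1)
    (hm : (1 ≤ m ∧ (m:ℝ) < d) ∨ (d < (m:ℝ) ∧ m ≤ 0)) :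
    (1 ≤ m ∧ m ≤ a) ∨ (a+1 ≤ m ∧ m ≤ 0) := by
  rcases hm with ⟨h1, h2⟩ | ⟨h1, h2⟩
  · left
    refine ⟨h1, ?_⟩
    have hr : (m:ℝ) < (a:ℝ)+1 := h2.trans hd2
    have : (m:ℝ) < ((a+1:ℤ):ℝ) := by push_cast; linarith
    have : m < a+1 := by exact_mod_cast this
    omega
  · right
    refine ⟨?_, h2⟩
    have : (a:ℝ) < (m:ℝ) := hd1.trans h1
    have : a < m := by exact_mod_cast this
    omega

lemma no_branch {d : ℝ} (h0 : 0 < d) (h1 : d < 1) {m : ℤ}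
    (hm : (1 ≤ m ∧ (m:ℝ) < d) ∨ (d < (m:ℝ) ∧ m ≤ 0)) : False := by
  rcases hm with ⟨h2, h3⟩ | ⟨h2, h3⟩
  · have : (1:ℝ) ≤ (m:ℝ) := by exact_mod_cast h2
    linarith
  · have : (m:ℝ) ≤ 0 := by exact_mod_cast h3
    linarith

lemma sep_of_ge {B : Set (Fin n → ℝ)} (hBa : B ⊆ ArrComp n) {α : Fin n → ℝ}
    (hα : α ∈ PosRoot n) {m a : ℤ} (h1 : 1 ≤ m) (hma : m ≤ a)
    (hB : ∀ x ∈ B, (a:ℝ) ≤ dotp n x α) : Separates n α m (FundAlcove n) B := by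
  left
  constructor
  · intro x hx
    have h2 := (hx α hα).2
    have hm1 : (1:ℝ) ≤ (m:ℝ) := by exact_mod_cast h1
    linarith
  · intro x hx
    have hge : (a:ℝ) ≤ dotp n x α := hB x hx
    have hma' : (m:ℝ) ≤ (a:ℝ) := by exact_mod_cast hma
    exact lt_of_le_of_ne (hma'.trans hge) (Ne.symm (hBa hx α hα m))

lemma sep_of_le {B : Set (Fin n → ℝ)} (hBa : B ⊆ ArrComp n) {α : Fin n → ℝ}
    (hα : α ∈ PosRoot n) {m a : ℤ} (h0 : m ≤ 0) (ham : a+1 ≤ m)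
    (hB : ∀ x ∈ B, dotp n x α ≤ (a:ℝ)+1) : Separates n α m (FundAlcove n) B := by
  right
  constructor
  · intro x hx
    have hge : dotp n x α ≤ (a:ℝ)+1 := hB x hx
    have hma' : ((a:ℝ))+1 ≤ (m:ℝ) := by exact_mod_cast ham
    exact lt_of_le_of_ne (hge.trans hma') (hBa hx α hα m)
  · intro x hx
    have h2 := (hx α hα).1
    have hm1 : (m:ℝ) ≤ 0 := by exact_mod_cast h0
    linarith

lemma cube_bound₀ {P : ℝ} {i₀ : Fin n} {x : Fin n → ℝ} (hx : x ∈ cube n (pbuild n i₀ P)) :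
    P - 1/2 ≤ x i₀ ∧ x i₀ ≤ P + 1/2 := by
  have := hx i₀
  rw [show pbuild n i₀ P i₀ = P from if_pos rfl, abs_le] at this
  constructor <;> linarith [this.1, this.2]

lemma cube_bound₁ {P : ℝ} {i₀ : Fin n} {x : Fin n → ℝ} (hx : x ∈ cube n (pbuild n i₀ P))
    {j : Fin n} (hj : j ≠ i₀) : -(1/2) ≤ x j ∧ x j ≤ 1/2 := by
  have := hx j
  rw [show pbuild n i₀ P j = 0 from if_neg hj, sub_zero, abs_le] at this
  exact this

end Aux8

section Aux9
variable {n : ℕ}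

lemma ybuild_arr (i₀ : Fin n) (s : ℝ) (a1 a2 a3 : ℤ)
    (h2s1 : (a1:ℝ) < 2*s) (h2s2 : 2*s < a1+1)
    (hps : ∀ d:ℝ, 0 < d → d < 4⁻¹ → (a2:ℝ) < s+d ∧ s+d < a2+1)
    (hsm : ∀ d:ℝ, 0 < d → d < 4⁻¹ → (a3:ℝ) < s-d ∧ s-d < a3+1) :
    ybuild n i₀ s ∈ ArrComp n := by
  intro α hα m
  set y := ybuild n i₀ s with hy
  have hyi₀ : y i₀ = s := if_pos rfl
  have hyi : ∀ i, i ≠ i₀ → y i = del n i := fun i h => if_neg h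
  rcases hα with ⟨i, rfl⟩ | ⟨i, j, hij, (rfl | rfl)⟩
  · rw [dotp_smul2]
    by_cases hi : i = i₀
    · rw [hi, hyi₀]
      exact ne_int_of_between h2s1 h2s2 m
    · rw [hyi i hi]
      have h1 := del_pos i
      have h2 := del_lt i
      exact ne_int_of_between (a := 0) (by push_cast; linarith) (by push_cast; linarith) m
  · rw [dotp_addb]
    by_cases hi : i = i₀
    · have hjne : j ≠ i₀ := by
        intro he
        have hij' : i = j := hi.trans he.symm
        rw [hij'] at hij
        exact lt_irrefl _ hij
      rw [hi, hyi₀, hyi j hjne]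
      obtain ⟨hp1, hp2⟩ := hps (del n j) (del_pos j) (del_lt j)
      exact ne_int_of_between hp1 hp2 m
    · by_cases hj : j = i₀
      · rw [hj, hyi₀, hyi i hi, add_comm]
        obtain ⟨hp1, hp2⟩ := hps (del n i) (del_pos i) (del_lt i)
        exact ne_int_of_between hp1 hp2 m
      · rw [hyi i hi, hyi j hj]
        have h1 := del_pos i
        have h2 := del_pos j
        have h3 := del_lt i
        have h4 := del_lt j
        exact ne_int_of_between (a := 0) (by push_cast; linarith) (by push_cast; linarith) m
  · rw [dotp_subb]
    by_cases hi : i = i₀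
    · have hjne : j ≠ i₀ := by
        intro he
        have hij' : i = j := hi.trans he.symm
        rw [hij'] at hij
        exact lt_irrefl _ hij
      rw [hi, hyi₀, hyi j hjne]
      obtain ⟨hm1, hm2⟩ := hsm (del n j) (del_pos j) (del_lt j)
      exact ne_int_of_between hm1 hm2 m
    · by_cases hj : j = i₀
      · rw [hj, hyi₀, hyi i hi]
        obtain ⟨hm1, hm2⟩ := hsm (del n i) (del_pos i) (del_lt i)
        refine ne_int_of_between (a := -a3-1) (by push_cast; push_cast at hm2; linarith)
          (by push_cast; push_cast at hm1; linarith) m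
      · rw [hyi i hi, hyi j hj]
        have h2 := del_pos j
        have h3 := del_lt i
        have h5 := del_anti hij
        exact ne_int_of_between (a := 0) (by push_cast; linarith) (by push_cast; linarith) m

lemma ybuild_cube (i₀ : Fin n) (s P : ℝ) (a1 : ℤ)
    (h2s1 : (a1:ℝ) < 2*s) (h2s2 : 2*s < a1+1)
    (hyarr : ybuild n i₀ s ∈ ArrComp n)
    (hc1 : 2*P - 1 ≤ (a1:ℝ)) (hc2 : (a1:ℝ) + 1 ≤ 2*P + 1) :
    connectedComponentIn (ArrComp n) (ybuild n i₀ s) ⊆ cube n (pbuild n i₀ P) := by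
  intro x hx i
  set y := ybuild n i₀ s with hy
  have hyB : y ∈ connectedComponentIn (ArrComp n) y := mem_connectedComponentIn hyarr
  have hxa : x ∈ ArrComp n := connectedComponentIn_subset _ _ hx
  have hroot : ((2:ℝ) • stdBasis n i) ∈ PosRoot n := Or.inl ⟨i, rfl⟩
  by_cases hi : i = i₀
  · have hyv : dotp n y ((2:ℝ) • stdBasis n i) = 2*s := by
      rw [dotp_smul2, hi, show y i₀ = s from if_pos rfl]
    -- upper bound
    have hu : dotp n x ((2:ℝ) • stdBasis n i) < ((a1+1 : ℤ):ℝ) := by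
      apply comp_mono_lt y hroot (a1+1) hyB hx
      rw [hyv]; push_cast; linarith
    -- lower bound
    have hl : (a1:ℝ) < dotp n x ((2:ℝ) • stdBasis n i) := by
      by_contra hcon
      push_neg at hcon
      have hne : dotp n x ((2:ℝ) • stdBasis n i) ≠ ((a1:ℤ):ℝ) := hxa _ hroot a1
      have : dotp n x ((2:ℝ) • stdBasis n i) < (a1:ℝ) := lt_of_le_of_ne hcon hne
      have := comp_mono_lt y hroot a1 hx hyB this
      rw [hyv] at this
      linarith
    rw [dotp_smul2] at hu hl
    push_cast at hu
    rw [hi] at hl hu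
    rw [hi, show pbuild n i₀ P i₀ = P from if_pos rfl, abs_le]
    constructor <;> linarith
  · have hyv : dotp n y ((2:ℝ) • stdBasis n i) = 2 * del n i := by
      rw [dotp_smul2, show y i = del n i from if_neg hi]
    have hd1 := del_pos i
    have hd2 := del_lt i
    have hu : dotp n x ((2:ℝ) • stdBasis n i) < ((1 : ℤ):ℝ) := by
      apply comp_mono_lt y hroot 1 hyB hx
      rw [hyv]; push_cast; linarith
    have hl : ((0:ℤ):ℝ) < dotp n x ((2:ℝ) • stdBasis n i) := by
      by_contra hcon
      push_neg at hcon
      have hne : dotp n x ((2:ℝ) • stdBasis n i) ≠ ((0:ℤ):ℝ) := hxa _ hroot 0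
      have : dotp n x ((2:ℝ) • stdBasis n i) < ((0:ℤ):ℝ) := lt_of_le_of_ne hcon hne
      have := comp_mono_lt y hroot 0 hx hyB this
      rw [hyv] at this
      push_cast at this
      linarith
    rw [dotp_smul2] at hu hl
    push_cast at hu hl
    rw [show pbuild n i₀ P i = 0 from if_neg hi, sub_zero, abs_le]
    constructor <;> linarith

end Aux9

section Aux10
variable {n : ℕ}

lemma sep_master (i₀ : Fin n) (s P : ℝ) (a1 a2 a3 : ℤ)
    (h2s1 : (a1:ℝ) < 2*s) (h2s2 : 2*s < a1+1)
    (hps : ∀ d:ℝ, 0 < d → d < 4⁻¹ → (a2:ℝ) < s+d ∧ s+d < a2+1)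
    (hsm : ∀ d:ℝ, 0 < d → d < 4⁻¹ → (a3:ℝ) < s-d ∧ s-d < a3+1)
    (S1 : 1 ≤ a1 → (a1:ℝ) ≤ 2*P - 1) (S1' : a1 ≤ -1 → 2*P + 1 ≤ (a1:ℝ) + 1)
    (S2 : 1 ≤ a2 → (a2:ℝ) ≤ P - 1) (S2' : a2 ≤ -1 → P + 1 ≤ (a2:ℝ) + 1)
    (S3 : 1 ≤ a3 → (a3:ℝ) ≤ P - 1) (S3' : a3 ≤ -1 → P + 1 ≤ (a3:ℝ) + 1)
    (S4 : 1 ≤ -a3-1 → ((-a3-1 : ℤ):ℝ) ≤ -P - 1) (S4' : -a3-1 ≤ -1 → 1 - P ≤ ((-a3-1 : ℤ):ℝ) + 1) :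
    ∀ q ∈ Tset n (ybuild n i₀ s), ∀ B : Set (Fin n → ℝ), B ⊆ cube n (pbuild n i₀ P) →
      B ⊆ ArrComp n → Separates n q.1 q.2 (FundAlcove n) B := by
  rintro ⟨α, m⟩ ⟨hα, hm⟩ B hBc hBa
  set y := ybuild n i₀ s with hy
  have hyi₀ : y i₀ = s := if_pos rfl
  have hyi : ∀ i, i ≠ i₀ → y i = del n i := fun i h => if_neg h
  simp only at hm ⊢
  rcases hα with ⟨i, rfl⟩ | ⟨i, j, hij, (rfl | rfl)⟩
  · -- α = 2 ε_i
    have hα' : ((2:ℝ) • stdBasis n i) ∈ PosRoot n := Or.inl ⟨i, rfl⟩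
    rw [dotp_smul2] at hm
    by_cases hi : i = i₀
    · rw [hi, hyi₀] at hm
      rcases branch_analysis h2s1 h2s2 hm with ⟨hm1, hma⟩ | ⟨ham, hm0⟩
      · have ha : 1 ≤ a1 := le_trans hm1 hma
        refine sep_of_ge hBa hα' hm1 hma ?_
        intro x hx
        rw [dotp_smul2, hi]
        obtain ⟨hb1, hb2⟩ := cube_bound₀ (hBc hx)
        have := S1 ha
        linarith
      · have ha : a1 ≤ -1 := by omega
        refine sep_of_le hBa hα' hm0 ham ?_
        intro x hx
        rw [dotp_smul2, hi]
        obtain ⟨hb1, hb2⟩ := cube_bound₀ (hBc hx)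
        have := S1' ha
        linarith
    · rw [hyi i hi] at hm
      have h1 := del_pos i
      have h2 := del_lt i
      exact absurd hm (fun h => no_branch (by linarith) (by linarith) h)
  · -- α = ε_i + ε_j
    have hα' : (stdBasis n i + stdBasis n j) ∈ PosRoot n := Or.inr ⟨i, j, hij, Or.inl rfl⟩
    rw [dotp_addb] at hm
    by_cases hi : i = i₀
    · have hjne : j ≠ i₀ := by
        intro he
        have hij' : i = j := hi.trans he.symm
        rw [hij'] at hij; exact lt_irrefl _ hij
      rw [hi, hyi₀, hyi j hjne] at hm
      obtain ⟨hp1, hp2⟩ := hps (del n j) (del_pos j) (del_lt j)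
      rcases branch_analysis hp1 hp2 hm with ⟨hm1, hma⟩ | ⟨ham, hm0⟩
      · have ha : 1 ≤ a2 := le_trans hm1 hma
        refine sep_of_ge hBa hα' hm1 hma ?_
        intro x hx
        rw [dotp_addb, hi]
        obtain ⟨hb1, hb2⟩ := cube_bound₀ (hBc hx)
        obtain ⟨hb3, hb4⟩ := cube_bound₁ (hBc hx) hjne
        have := S2 ha
        linarith
      · have ha : a2 ≤ -1 := by omega
        refine sep_of_le hBa hα' hm0 ham ?_
        intro x hx
        rw [dotp_addb, hi]
        obtain ⟨hb1, hb2⟩ := cube_bound₀ (hBc hx)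
        obtain ⟨hb3, hb4⟩ := cube_bound₁ (hBc hx) hjne
        have := S2' ha
        linarith
    · by_cases hj : j = i₀
      · have hine : i ≠ i₀ := hi
        rw [hj, hyi₀, hyi i hine, add_comm] at hm
        obtain ⟨hp1, hp2⟩ := hps (del n i) (del_pos i) (del_lt i)
        rcases branch_analysis hp1 hp2 hm with ⟨hm1, hma⟩ | ⟨ham, hm0⟩
        · have ha : 1 ≤ a2 := le_trans hm1 hma
          refine sep_of_ge hBa hα' hm1 hma ?_
          intro x hx
          rw [dotp_addb, hj]
          obtain ⟨hb1, hb2⟩ := cube_bound₀ (hBc hx)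
          obtain ⟨hb3, hb4⟩ := cube_bound₁ (hBc hx) hine
          have := S2 ha
          linarith
        · have ha : a2 ≤ -1 := by omega
          refine sep_of_le hBa hα' hm0 ham ?_
          intro x hx
          rw [dotp_addb, hj]
          obtain ⟨hb1, hb2⟩ := cube_bound₀ (hBc hx)
          obtain ⟨hb3, hb4⟩ := cube_bound₁ (hBc hx) hine
          have := S2' ha
          linarith
      · rw [hyi i hi, hyi j hj] at hm
        have h1 := del_pos i
        have h2 := del_pos j
        have h3 := del_lt i
        have h4 := del_lt j
        exact absurd hm (fun h => no_branch (by linarith) (by linarith) h)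
  · -- α = ε_i - ε_j
    have hα' : (stdBasis n i - stdBasis n j) ∈ PosRoot n := Or.inr ⟨i, j, hij, Or.inr rfl⟩
    rw [dotp_subb] at hm
    by_cases hi : i = i₀
    · have hjne : j ≠ i₀ := by
        intro he
        have hij' : i = j := hi.trans he.symm
        rw [hij'] at hij; exact lt_irrefl _ hij
      rw [hi, hyi₀, hyi j hjne] at hm
      obtain ⟨hm1', hm2'⟩ := hsm (del n j) (del_pos j) (del_lt j)
      rcases branch_analysis hm1' hm2' hm with ⟨hm1, hma⟩ | ⟨ham, hm0⟩
      · have ha : 1 ≤ a3 := le_trans hm1 hma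
        refine sep_of_ge hBa hα' hm1 hma ?_
        intro x hx
        rw [dotp_subb, hi]
        obtain ⟨hb1, hb2⟩ := cube_bound₀ (hBc hx)
        obtain ⟨hb3, hb4⟩ := cube_bound₁ (hBc hx) hjne
        have := S3 ha
        linarith
      · have ha : a3 ≤ -1 := by omega
        refine sep_of_le hBa hα' hm0 ham ?_
        intro x hx
        rw [dotp_subb, hi]
        obtain ⟨hb1, hb2⟩ := cube_bound₀ (hBc hx)
        obtain ⟨hb3, hb4⟩ := cube_bound₁ (hBc hx) hjne
        have := S3' ha
        linarith
    · by_cases hj : j = i₀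
      · have hine : i ≠ i₀ := hi
        rw [hj, hyi₀, hyi i hine] at hm
        obtain ⟨hq1, hq2⟩ := hsm (del n i) (del_pos i) (del_lt i)
        have hr1 : ((-a3-1 : ℤ):ℝ) < del n i - s := by push_cast; push_cast at hq2; linarith
        have hr2 : del n i - s < ((-a3-1 : ℤ):ℝ) + 1 := by push_cast; push_cast at hq1; linarith
        rcases branch_analysis hr1 hr2 hm with ⟨hm1, hma⟩ | ⟨ham, hm0⟩
        · have ha : 1 ≤ -a3-1 := le_trans hm1 hma
          refine sep_of_ge hBa hα' hm1 hma ?_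
          intro x hx
          rw [dotp_subb, hj]
          obtain ⟨hb1, hb2⟩ := cube_bound₀ (hBc hx)
          obtain ⟨hb3, hb4⟩ := cube_bound₁ (hBc hx) hine
          have := S4 ha
          push_cast at this ⊢
          linarith
        · have ha : -a3-1 ≤ -1 := by omega
          refine sep_of_le hBa hα' hm0 ham ?_
          intro x hx
          rw [dotp_subb, hj]
          obtain ⟨hb1, hb2⟩ := cube_bound₀ (hBc hx)
          obtain ⟨hb3, hb4⟩ := cube_bound₁ (hBc hx) hine
          have := S4' ha
          push_cast at this ⊢
          linarith
      · rw [hyi i hi, hyi j hj] at hm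
        have h2 := del_pos j
        have h3 := del_lt i
        have h5 := del_anti hij
        exact absurd hm (fun h => no_branch (by linarith) (by linarith) h)

end Aux10

section Aux11

lemma case_master (n : ℕ) (hn : 1 ≤ n) (i₀ : Fin n) (s P : ℝ) (a1 a2 a3 : ℤ)
    (h2s1 : (a1:ℝ) < 2*s) (h2s2 : 2*s < a1+1)
    (hps : ∀ d:ℝ, 0 < d → d < 4⁻¹ → (a2:ℝ) < s+d ∧ s+d < a2+1)
    (hsm : ∀ d:ℝ, 0 < d → d < 4⁻¹ → (a3:ℝ) < s-d ∧ s-d < a3+1)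
    (hc1 : 2*P - 1 ≤ (a1:ℝ)) (hc2 : (a1:ℝ) + 1 ≤ 2*P + 1)
    (S1 : 1 ≤ a1 → (a1:ℝ) ≤ 2*P - 1) (S1' : a1 ≤ -1 → 2*P + 1 ≤ (a1:ℝ) + 1)
    (S2 : 1 ≤ a2 → (a2:ℝ) ≤ P - 1) (S2' : a2 ≤ -1 → P + 1 ≤ (a2:ℝ) + 1)
    (S3 : 1 ≤ a3 → (a3:ℝ) ≤ P - 1) (S3' : a3 ≤ -1 → P + 1 ≤ (a3:ℝ) + 1)
    (S4 : 1 ≤ -a3-1 → ((-a3-1 : ℤ):ℝ) ≤ -P - 1) (S4' : -a3-1 ≤ -1 → 1 - P ≤ ((-a3-1 : ℤ):ℝ) + 1)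
    (A : Set (Fin n → ℝ)) (hA : IsAlcove n A) (hcube : A ⊆ cube n (pbuild n i₀ P))
    (hdist : ∀ B, IsAlcove n B → B ⊆ cube n (pbuild n i₀ P) →
      sepCount n (FundAlcove n) A ≤ sepCount n (FundAlcove n) B) :
    sepCount n (FundAlcove n) A
      = a1.natAbs + (a2.natAbs + a3.natAbs) * (n - 1 - i₀.val)
        + (a2.natAbs + (-a3-1).natAbs) * i₀.val := by
  have hyarr := ybuild_arr i₀ s a1 a2 a3 h2s1 h2s2 hps hsm
  refine sandwich n _ hn (pbuild n i₀ P) (ybuild n i₀ s) hyarr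
    (ybuild_cube i₀ s P a1 h2s1 h2s2 hyarr hc1 hc2) ?_
    (sep_master i₀ s P a1 a2 a3 h2s1 h2s2 hps hsm S1 S1' S2 S2' S3 S3' S4 S4')
    A hA hcube hdist
  rw [Tset_eq _ hyarr, Set.ncard_coe_finset, Tfin_card,
    Tcard_eval i₀ s a1 a2 a3 h2s1 h2s2 hps hsm]

end Aux11

/-- Let `w` be the minimal length coset representative whose coroot lattice point is
`⌈k/2n⌉ ε_ℓ` (resp. `-⌈k/2n⌉ ε_{2n-ℓ+1}` when `ℓ > n`), where `k = 2n(⌈k/2n⌉ - 1) + ℓ`,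
`1 ≤ ℓ ≤ 2n`.  Then exactly `k` hyperplanes of the arrangement separate the fundamental
alcove from the alcove of `w`; equivalently `ℓ(w) = k`. -/
theorem stmt12 (n k ℓ : ℕ) (hn : 2 ≤ n) (hk : 1 ≤ k) (h1 : 1 ≤ ℓ) (h2 : ℓ ≤ 2*n)
    (c : ℕ) (hc : c = (k + 2*n - 1)/(2*n)) (hkℓ : k = 2*n*(c-1) + ℓ)
    (p : Fin n → ℝ)
    (hp : p = if ℓ ≤ n then (fun i => if i.val = ℓ - 1 then (c : ℝ) else 0)
              else (fun i => if i.val = 2*n - ℓ then -(c : ℝ) else 0))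
    (A : Set (Fin n → ℝ)) (hA : IsAlcove n A) (hcube : A ⊆ cube n p)
    (hdist : ∀ B, IsAlcove n B → B ⊆ cube n p →
      sepCount n (FundAlcove n) A ≤ sepCount n (FundAlcove n) B) :
    sepCount n (FundAlcove n) A = k := by
  have hc1n : 1 ≤ c := by
    rw [hc]
    exact (Nat.one_le_div_iff (by omega)).mpr (by omega)
  have hcR : (1:ℝ) ≤ (c:ℕ) := by exact_mod_cast hc1n
  have hcz : (1:ℤ) ≤ (c:ℤ) := by exact_mod_cast hc1n
  by_cases hl : ℓ ≤ n
  · set i₀ : Fin n := ⟨ℓ-1, by omega⟩ with hi₀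
    have hpeq : p = pbuild n i₀ ((c:ℕ):ℝ) := by
      rw [hp, if_pos hl]
      funext i
      simp only [pbuild]
      by_cases h : i = i₀
      · rw [if_pos h, if_pos (by rw [h])]
      · rw [if_neg h, if_neg (fun hv => h (Fin.ext hv))]
    rw [hpeq] at hcube hdist
    have hres := case_master n (by omega) i₀ ((c:ℝ) - 4⁻¹) ((c:ℕ):ℝ)
      (2*(c:ℤ)-1) ((c:ℤ)-1) ((c:ℤ)-1)
      (by push_cast; linarith) (by push_cast; linarith)
      (fun d hd1 hd2 => ⟨by push_cast; linarith, by push_cast; linarith⟩)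
      (fun d hd1 hd2 => ⟨by push_cast; linarith, by push_cast; linarith⟩)
      (by push_cast; linarith) (by push_cast; linarith)
      (fun _ => by push_cast; linarith) (fun h => by exfalso; omega)
      (fun _ => by push_cast; linarith) (fun h => by exfalso; omega)
      (fun _ => by push_cast; linarith) (fun h => by exfalso; omega)
      (fun h => by exfalso; omega) (fun _ => by push_cast; linarith)
      A hA hcube hdist
    rw [hres]
    have e1 : (2*(c:ℤ)-1).natAbs = 2*c-1 := by omega
    have e2 : ((c:ℤ)-1).natAbs = c-1 := by omega
    have e3 : (-((c:ℤ)-1)-1).natAbs = c := by omega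
    have e4 : i₀.val = ℓ-1 := rfl
    rw [e1, e2, e3, e4, hkℓ]
    zify [show 1 ≤ 2*c by omega, show 1 ≤ c from hc1n, show 1 ≤ ℓ from h1,
      show ℓ - 1 ≤ n - 1 by omega, show 1 ≤ n by omega]
    ring
  · set i₀ : Fin n := ⟨2*n-ℓ, by omega⟩ with hi₀
    have hpeq : p = pbuild n i₀ (-((c:ℕ):ℝ)) := by
      rw [hp, if_neg hl]
      funext i
      simp only [pbuild]
      by_cases h : i = i₀
      · rw [if_pos h, if_pos (by rw [h])]
      · rw [if_neg h, if_neg (fun hv => h (Fin.ext hv))]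
    rw [hpeq] at hcube hdist
    have hres := case_master n (by omega) i₀ (4⁻¹ - (c:ℝ)) (-((c:ℕ):ℝ))
      (-(2*(c:ℤ))) (-(c:ℤ)) (-(c:ℤ))
      (by push_cast; linarith) (by push_cast; linarith)
      (fun d hd1 hd2 => ⟨by push_cast; linarith, by push_cast; linarith⟩)
      (fun d hd1 hd2 => ⟨by push_cast; linarith, by push_cast; linarith⟩)
      (by push_cast; linarith) (by push_cast; linarith)
      (fun h => by exfalso; omega) (fun _ => by push_cast; linarith)
      (fun h => by exfalso; omega) (fun _ => by push_cast; linarith)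
      (fun h => by exfalso; omega) (fun _ => by push_cast; linarith)
      (fun _ => by push_cast; linarith) (fun h => by exfalso; omega)
      A hA hcube hdist
    rw [hres]
    have e1 : (-(2*(c:ℤ))).natAbs = 2*c := by omega
    have e2 : (-(c:ℤ)).natAbs = c := by omega
    have e3 : (-(-(c:ℤ))-1).natAbs = c-1 := by omega
    have e4 : i₀.val = 2*n-ℓ := rfl
    rw [e1, e2, e3, e4, hkℓ]
    zify [show 1 ≤ c from hc1n, show 2*n - ℓ ≤ n - 1 by omega, show 1 ≤ n by omega,
      show ℓ ≤ 2*n from h2]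
    ring
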